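/- For a saturated empire E and each error place p ∈ Err, there exists no state q ∈ Q such that p lies in some region of terr(q). -/

import Mathlib

/-!
Common semantic framework for "The Ghosts of Empires":
Petri programs, Hoare triples, invariant domains, Owicki-Gries annotations,
territories, empires, saturated empires, focus.
-/

namespace GhostsOfEmpires

/-- Reachable states of a (partial) state machine with transition alphabet `T`. -/
inductive EmpReach {Q T : Type*} (q0 : Q) (δ : Q → T → Option Q) : Q → Prop
  | init : EmpReach q0 δ q0
  | step {q : Q} {t : T} {q' : Q} : EmpReach q0 δ q → δ q t = some q' → EmpReach q0 δ q'

/-- Restriction of a partial transition function to the reachable part. -/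
def restrictδ {Q T : Type*} (q0 : Q) (δ : Q → T → Option Q)
    (q : {q : Q // EmpReach q0 δ q}) (t : T) : Option {q : Q // EmpReach q0 δ q} :=
  match h : δ q.val t with
  | none => none
  | some q' => some ⟨q', EmpReach.step q.property h⟩

/-- A Petri program: places, transitions, flow relation (given by `pre`/`post`),
initial marking, statement labels, error places, and a semantics for statements
(formulas over the program variables are modelled semantically as predicates on `State`,
the type of valuations of the program variables). Since the program is assumed one-safe,
markings are identified with sets of places. -/
structure PetriNet (Place Trans Stmt State : Type*) where
  pre : Trans → Set Place
  post : Trans → Set Place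
  mInit : Set Place
  label : Trans → Stmt
  err : Set Place
  sem : Stmt → State → State → Prop

/-- Owicki-Gries annotation: ghost state type `GS` (the product of the domains of the
ghost variables), invariant mapping `ω` (formulas over program and ghost variables),
ghost update mapping `γ` (executed after the statement of the transition), and
initial ghost valuation `ρ`. -/
structure OG (Place Trans State GS : Type*) where
  ω : Place → State → GS → Prop
  γ : Trans → State → GS → GS
  ρ : GS

/-- The data of an empire: a state machine with laws and territories. -/
structure EmpireData (Place Trans State Q : Type*) where
  qInit : Q
  δ : Q → Trans → Option Q
  law : Q → State → Prop
  terr : Q → Set (Set Place)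

/-- `Q_p`: the set of empire states whose territory contains `p` in some region. -/
def Qp {Place Trans State Q : Type*} (E : EmpireData Place Trans State Q) (p : Place) :
    Set Q :=
  {q | ∃ r ∈ E.terr q, p ∈ r}

/-- The imperial Owicki-Gries annotation of an empire: one ghost variable `g` ranging
over the states `Q`, initialized to `qInit`, updated according to `δ`, and
`ω(p) = ⋁_{q ∈ Q_p} (g = q ∧ law q)`. -/
def imperialOG {Place Trans State Q : Type*} (E : EmpireData Place Trans State Q) :
    OG Place Trans State Q where
  ω := fun p s g => ∃ q ∈ Qp E p, g = q ∧ E.law q s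
  γ := fun t _ g => (E.δ g t).getD g
  ρ := E.qInit

/-- Restriction of an empire given by raw data to its reachable part. -/
def restrictEmpire {Place Trans State Q : Type*} (q0 : Q) (δ0 : Q → Trans → Option Q)
    (law : Q → State → Prop) (terr : Q → Set (Set Place)) :
    EmpireData Place Trans State {q : Q // EmpReach q0 δ0 q} where
  qInit := ⟨q0, EmpReach.init⟩
  δ := restrictδ q0 δ0
  law := fun q => law q.val
  terr := fun q => terr q.val

/-- `m ∈ ⟦τ⟧`: `m` is derived by taking exactly one place from each region of `τ`. -/
def InTreaty {Place : Type*} (τ : Set (Set Place)) (m : Set Place) : Prop :=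
  ∃ f : Set Place → Place, (∀ r ∈ τ, f r ∈ r) ∧ m = {p | ∃ r ∈ τ, p = f r}

namespace PetriNet

variable {Place Trans Stmt State : Type*} (N : PetriNet Place Trans Stmt State)

/-- `m ▷t m'`: transition `t` is enabled in `m` and firing it yields `m'`. -/
def fires (m : Set Place) (t : Trans) (m' : Set Place) : Prop :=
  N.pre t ⊆ m ∧ m' = (m \ N.pre t) ∪ N.post t

/-- Firing sequences. -/
inductive FiringSeq : Set Place → List Trans → Set Place → Prop
  | nil (m : Set Place) : FiringSeq m [] m
  | cons {m m' m'' : Set Place} {t : Trans} {ts : List Trans} :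
      N.fires m t m' → FiringSeq m' ts m'' → FiringSeq m (t :: ts) m''

/-- A marking is reachable if some firing sequence from the initial marking ends in it. -/
def Reachable (m : Set Place) : Prop := ∃ ts, N.FiringSeq N.mInit ts m

/-- The Hoare triple `{φ} st {ψ}` holds. -/
def Hoare (φ : State → Prop) (st : Stmt) (ψ : State → Prop) : Prop :=
  ∀ s s', φ s → N.sem st s s' → ψ s'

/-- Semantics of a sequence of statements. -/
inductive SeqSem : List Stmt → State → State → Prop
  | nil (s : State) : SeqSem [] s s
  | cons {st : Stmt} {sts : List Stmt} {s s' s'' : State} :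
      N.sem st s s' → SeqSem sts s' s'' → SeqSem (st :: sts) s s''

/-- The Petri program is correct: for every firing sequence reaching a marking that
contains an error place, the Hoare triple `{⊤} λ(t1)...λ(tn) {⊥}` holds. -/
def Correct : Prop :=
  ∀ ts m, N.FiringSeq N.mInit ts m → (m ∩ N.err).Nonempty →
    ∀ s s', N.SeqSem (List.map N.label ts) s s' → False

/-- `p` and `t` are co-marked. -/
def coMarked (p : Place) (t : Trans) : Prop :=
  p ∉ N.pre t ∧ ∃ m, N.Reachable m ∧ p ∈ m ∧ N.pre t ⊆ m

/-- Two places are co-related. -/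
def coRelated (p p' : Place) : Prop :=
  p ≠ p' ∧ ∃ m, N.Reachable m ∧ p ∈ m ∧ p' ∈ m

/-- A region: a nonempty set of places that are pairwise not co-related. -/
def IsRegion (r : Set Place) : Prop :=
  r.Nonempty ∧ ∀ p1 ∈ r, ∀ p2 ∈ r, ¬ N.coRelated p1 p2

/-- A territory: a set of pairwise disjoint regions all of whose treaty members are
reachable markings. -/
def IsTerritory (τ : Set (Set Place)) : Prop :=
  (∀ r ∈ τ, N.IsRegion r) ∧
  (∀ r1 ∈ τ, ∀ r2 ∈ τ, r1 ≠ r2 → r1 ∩ r2 = ∅) ∧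
  (∀ m, InTreaty τ m → N.Reachable m)

/-- `t` is enabled in the territory `τ`: every predecessor place lies in a distinct
region of `τ`. -/
def terrEnabled (t : Trans) (τ : Set (Set Place)) : Prop :=
  ∃ f : Place → Set Place, (∀ p ∈ N.pre t, f p ∈ τ ∧ p ∈ f p) ∧
    ∀ p1 ∈ N.pre t, ∀ p2 ∈ N.pre t, p1 ≠ p2 → f p1 ≠ f p2

/-- `τ ▷t τ'`: the firing relation on territories. -/
def terrFires (τ : Set (Set Place)) (t : Trans) (τ' : Set (Set Place)) : Prop :=
  ∃ f f' : Place → Set Place,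
    (∀ p ∈ N.pre t, f p ∈ τ ∧ p ∈ f p) ∧
    (∀ p1 ∈ N.pre t, ∀ p2 ∈ N.pre t, p1 ≠ p2 → f p1 ≠ f p2) ∧
    (∀ p ∈ N.post t, N.IsRegion (f' p) ∧ p ∈ f' p) ∧
    (∀ p1 ∈ N.post t, ∀ p2 ∈ N.post t, p1 ≠ p2 → f' p1 ≠ f' p2) ∧
    τ' = (τ \ {r | ∃ p ∈ N.pre t, r = f p}) ∪ {r | ∃ p ∈ N.post t, r = f' p}

/-- The bystander regions of `t` in `τ`. -/
def bystanders (t : Trans) (τ : Set (Set Place)) : Set (Set Place) :=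
  {r ∈ τ | r ∩ N.pre t = ∅}

/-- The replaced territory `replace(t,τ)`. -/
def replaceT (t : Trans) (τ : Set (Set Place)) : Set (Set Place) :=
  N.bystanders t τ ∪ {r | ∃ p ∈ N.post t, r = {p}}

/-- `τ` is extendable with `t`. -/
def extendable (t : Trans) (τ : Set (Set Place)) : Prop :=
  N.terrEnabled t τ ∧ (∃ p, N.pre t = {p}) ∧ (∃ p', N.post t = {p'}) ∧
    ∀ r ∈ τ, (r ∩ N.pre t).Nonempty → ∀ p'' ∈ r, ∀ p' ∈ N.post t, ¬ N.coRelated p' p''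

/-- The extended territory `extend(t,τ)`: the (unique) region meeting `•t` is enlarged
by the successor place. -/
def extendT (t : Trans) (τ : Set (Set Place)) : Set (Set Place) :=
  N.bystanders t τ ∪ {r' | ∃ r ∈ τ, (r ∩ N.pre t).Nonempty ∧ r' = r ∪ N.post t}

/-- An invariant domain for `N`: a finite set `A` of formulas (modelled semantically)
containing `⊥` and `⊤`, and a post operator such that `{φ} λ(t) {post(φ,t)}` always holds. -/
structure InvDomain where
  A : Set (State → Prop)
  postF : (State → Prop) → Trans → (State → Prop)
  finA : A.Finite
  bot_mem : (fun _ => False) ∈ A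
  top_mem : (fun _ => True) ∈ A
  post_mem : ∀ φ ∈ A, ∀ t, postF φ t ∈ A
  post_hoare : ∀ φ ∈ A, ∀ t, N.Hoare φ (N.label t) (postF φ t)

/-- Reachable abstract configurations, generically over a type `Φ` of laws with a post
operator `postA` and top element `φtop`. -/
inductive AbsReachG {Φ : Type*} (postA : Φ → Trans → Φ) (φtop : Φ) : Set Place → Φ → Prop
  | init : AbsReachG postA φtop N.mInit φtop
  | step {m : Set Place} {φ : Φ} {t : Trans} {m' : Set Place} :
      AbsReachG postA φtop m φ → N.fires m t m' → AbsReachG postA φtop m' (postA φ t)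

/-- The invariant domain is safe: every reachable abstract configuration at a marking
containing an error place has law equivalent to `⊥`. -/
def SafeDomain (D : InvDomain N) : Prop :=
  ∀ m φ, N.AbsReachG D.postF (fun _ => True) m φ → (m ∩ N.err).Nonempty → ∀ s, ¬ φ s

/-- Validity of an Owicki-Gries annotation: initial, inductive, interference-free, safe. -/
structure OGValid {GS : Type*} (og : OG Place Trans State GS) : Prop where
  initialCond : ∀ p ∈ N.mInit, ∀ s, og.ω p s og.ρ
  inductiveCond : ∀ t s g s', (∀ p ∈ N.pre t, og.ω p s g) →
    N.sem (N.label t) s s' → ∀ p ∈ N.post t, og.ω p s' (og.γ t s' g)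
  interferenceFree : ∀ t p, N.coMarked p t → ∀ s g s',
    og.ω p s g → (∀ p' ∈ N.pre t, og.ω p' s g) →
    N.sem (N.label t) s s' → og.ω p s' (og.γ t s' g)
  safeCond : ∀ p ∈ N.err, ∀ s g, ¬ og.ω p s g

/-- The naive Owicki-Gries annotation `OG_naive(A,post)`: the ghost state is the set of
places `p` whose boolean ghost variable `g_p` is true; `ω(p)` is the disjunction over all
reachable markings `m` containing `p` of `χ(m) ∧ β(m)`. -/
def naiveOG (D : InvDomain N) : OG Place Trans State (Set Place) where
  ω := fun p s g => ∃ m, N.Reachable m ∧ p ∈ m ∧ g = m ∧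
    ∃ φ, N.AbsReachG D.postF (fun _ => True) m φ ∧ φ s
  γ := fun t _ g => (g \ (N.pre t \ N.post t)) ∪ (N.post t \ N.pre t)
  ρ := N.mInit

/-- Validity of an empire. -/
structure ValidEmpire {Q : Type*} (E : EmpireData Place Trans State Q) : Prop where
  terrOK : ∀ q, N.IsTerritory (E.terr q)
  initialLaw : ∀ s, E.law E.qInit s
  initialTerr : InTreaty (E.terr E.qInit) N.mInit
  inductiveLaw : ∀ q t, N.terrEnabled t (E.terr q) →
    (∃ q', E.δ q t = some q' ∧ N.Hoare (E.law q) (N.label t) (E.law q')) ∨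
      N.Hoare (E.law q) (N.label t) (fun _ => False)
  inductiveTerr : ∀ q t q', E.δ q t = some q' → N.terrFires (E.terr q) t (E.terr q')
  safeCond : ∀ q, (∃ r ∈ E.terr q, (r ∩ N.err).Nonempty) → ∀ s, ¬ E.law q s

/-- The initial territory `τ_init = {{p} | p ∈ m_init}`. -/
def tauInit : Set (Set Place) := {r | ∃ p ∈ N.mInit, r = {p}}

/-- `SaturateG postA φ rb τ τ'` means `τ' ∈ saturate(φ, rb, τ)` (saturated successors). -/
inductive SaturateG {Φ : Type*} (postA : Φ → Trans → Φ) (φ : Φ) (rb : Set (Set Place)) :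
    Set (Set Place) → Set (Set Place) → Prop
  | base {τ : Set (Set Place)} :
      (¬ ∃ t, N.extendable t τ ∧ ¬ N.terrFires τ t τ ∧ postA φ t = φ ∧
        rb ⊆ N.bystanders t τ) →
      SaturateG postA φ rb τ τ
  | step {τ : Set (Set Place)} {t : Trans} {τ' : Set (Set Place)} :
      N.extendable t τ → ¬ N.terrFires τ t τ → postA φ t = φ →
      rb ⊆ N.bystanders t τ → SaturateG postA φ rb (N.extendT t τ) τ' →
      SaturateG postA φ rb τ τ'

/-- `(q0, δ0)` is the data of a saturated empire (before restriction to the reachable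
part), generically over a type `Φ` of laws with post operator `postA`, interpretation
`interp` and top element `φtop`. -/
structure IsSaturatedG {Φ : Type*} (postA : Φ → Trans → Φ) (interp : Φ → State → Prop)
    (φtop : Φ) (q0 : Set (Set Place) × Φ)
    (δ0 : Set (Set Place) × Φ → Trans → Option (Set (Set Place) × Φ)) : Prop where
  initCond : ∃ τ, N.SaturateG postA φtop ∅ N.tauInit τ ∧ q0 = (τ, φtop)
  undefCond : ∀ τ φ t, (¬ N.terrEnabled t τ ∨ ∀ s, ¬ interp (postA φ t) s) →
    δ0 (τ, φ) t = none
  selfCond : ∀ τ φ t, N.terrEnabled t τ → (∃ s, interp (postA φ t) s) →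
    N.terrFires τ t τ → postA φ t = φ → δ0 (τ, φ) t = some (τ, φ)
  stepCond : ∀ τ φ t, N.terrEnabled t τ → (∃ s, interp (postA φ t) s) →
    ¬ (N.terrFires τ t τ ∧ postA φ t = φ) →
    ∃ τ', N.SaturateG postA (postA φ t) (N.bystanders t τ) (N.replaceT t τ) τ' ∧
      δ0 (τ, φ) t = some (τ', postA φ t)

open Classical in
/-- The transition function of the naive empire. -/
noncomputable def naiveδ (D : InvDomain N) (q : Set (Set Place) × (State → Prop))
    (t : Trans) : Option (Set (Set Place) × (State → Prop)) :=
  if N.terrEnabled t q.1 ∧ ∃ s, D.postF q.2 t s then some (N.replaceT t q.1, D.postF q.2 t)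
  else none

/-- The naive empire `E_naive(A,post)`: the reachable part of the empire whose states are
pairs of territories and laws, with initial state `⟨τ_init, ⊤⟩`. -/
noncomputable def naiveEmpire (D : InvDomain N) :
    EmpireData Place Trans State
      {q : Set (Set Place) × (State → Prop) //
        EmpReach (N.tauInit, fun _ => True) (N.naiveδ D) q} :=
  restrictEmpire (N.tauInit, fun _ => True) (N.naiveδ D) Prod.snd Prod.fst

open Classical in
/-- The product post operator of a family of invariant domains, acting on vectors of
component formulas (the vector `φv` represents the conjunction `⋀_i φv i`). -/
noncomputable def prodPost {n : ℕ} (Ds : Fin n → InvDomain N)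
    (φv : Fin n → State → Prop) (t : Trans) : Fin n → State → Prop :=
  if ∀ i, ∃ s, (Ds i).postF (φv i) t s then fun i => (Ds i).postF (φv i) t
  else fun _ _ => False

/-- Safety of the product invariant domain. -/
def prodSafe {n : ℕ} (Ds : Fin n → InvDomain N) : Prop :=
  ∀ m φv, N.AbsReachG (N.prodPost Ds) (fun _ _ => True) m φv →
    (m ∩ N.err).Nonempty → ∀ s, ¬ ∀ i, φv i s

/-- A focus on a saturated empire (given by raw data `(q0, δ0)` over vector laws). -/
structure IsFocus {n : ℕ} (Ds : Fin n → InvDomain N)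
    (q0 : Set (Set Place) × (Fin n → State → Prop))
    (δ0 : Set (Set Place) × (Fin n → State → Prop) → Trans →
      Option (Set (Set Place) × (Fin n → State → Prop)))
    (ℓ : Set (Set Place) × (Fin n → State → Prop) → Set Place → Set (Fin n)) :
    Prop where
  safeCond : ∀ q, EmpReach q0 δ0 q → ∀ t, N.terrEnabled t q.1 → δ0 q t = none →
    ∃ r ∈ q.1, ∃ i, (r ∩ N.pre t).Nonempty ∧ (∀ s, ¬ (Ds i).postF (q.2 i) t s) ∧ i ∈ ℓ q r
  inductiveEdge : ∀ q q' t, EmpReach q0 δ0 q → δ0 q t = some q' →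
    ∀ r' ∈ q'.1, (r' ∩ N.post t).Nonempty → ∀ i ∈ ℓ q' r',
      ∃ r ∈ q.1, (r ∩ N.pre t).Nonempty ∧ i ∈ ℓ q r
  bystandersCond : ∀ q q' t, EmpReach q0 δ0 q → δ0 q t = some q' →
    ∀ r ∈ N.bystanders t q.1, ∀ i ∈ ℓ q' r, i ∈ ℓ q r

end PetriNet

/-- A saturated empire (over scalar laws): the reachable part of the data `(q0, δ0)`. -/
def saturatedEmpire {Place Trans State : Type*}
    (q0 : Set (Set Place) × (State → Prop))
    (δ0 : Set (Set Place) × (State → Prop) → Trans →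
      Option (Set (Set Place) × (State → Prop))) :
    EmpireData Place Trans State {q // EmpReach q0 δ0 q} :=
  restrictEmpire q0 δ0 Prod.snd Prod.fst

/-- The focused law `law_p(q) = ⋀ {φ_i | ∃ r ∈ terr(q). i ∈ ℓ(q,r) ∧ p ∈ r}`. -/
def lawP {Place State : Type*} {n : ℕ}
    (ℓ : Set (Set Place) × (Fin n → State → Prop) → Set Place → Set (Fin n))
    (q : Set (Set Place) × (Fin n → State → Prop)) (p : Place) : State → Prop :=
  fun s => ∀ i, (∃ r ∈ q.1, i ∈ ℓ q r ∧ p ∈ r) → q.2 i s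

/-- `law_X(q) = ⋀_{p ∈ X} law_p(q)`. -/
def lawX {Place State : Type*} {n : ℕ}
    (ℓ : Set (Set Place) × (Fin n → State → Prop) → Set Place → Set (Fin n))
    (q : Set (Set Place) × (Fin n → State → Prop)) (X : Set Place) : State → Prop :=
  fun s => ∀ p ∈ X, lawP ℓ q p s

/-- The focused imperial Owicki-Gries annotation `OG_{E,ℓ}` of the saturated empire
given by `(q0, δ0)` (restricted to its reachable part) with focus `ℓ`:
`ω(p) = ⋁_{q ∈ Q_p} (g = q ∧ law_p(q))`. -/
def focusedOG {Place Trans State : Type*} {n : ℕ}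
    (q0 : Set (Set Place) × (Fin n → State → Prop))
    (δ0 : Set (Set Place) × (Fin n → State → Prop) → Trans →
      Option (Set (Set Place) × (Fin n → State → Prop)))
    (ℓ : Set (Set Place) × (Fin n → State → Prop) → Set Place → Set (Fin n)) :
    OG Place Trans State {q // EmpReach q0 δ0 q} where
  ω := fun p s g => ∃ q : {q // EmpReach q0 δ0 q},
    (∃ r ∈ q.val.1, p ∈ r) ∧ g = q ∧ lawP ℓ q.val p s
  γ := fun t _ g => (restrictδ q0 δ0 g t).getD g
  ρ := ⟨q0, EmpReach.init⟩

end GhostsOfEmpires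

namespace S17Aux
open GhostsOfEmpires Classical

variable {Place Trans Stmt State : Type*} {N : PetriNet Place Trans Stmt State}

lemma fs_append {m m' m'' : Set Place} {ts : List Trans} {t : Trans}
    (h : N.FiringSeq m ts m') :
    N.fires m' t m'' → N.FiringSeq m (ts ++ [t]) m'' := by
  induction h with
  | nil m => exact fun h2 => .cons h2 (.nil _)
  | cons hf _ ih => exact fun h2 => .cons hf (ih h2)

lemma reach_of_abs {Φ : Type*} {postA : Φ → Trans → Φ} {φtop : Φ} {m : Set Place} {φ : Φ}
    (h : N.AbsReachG postA φtop m φ) : N.Reachable m := by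
  induction h with
  | init => exact ⟨[], .nil _⟩
  | step _ hf ih => obtain ⟨ts, hts⟩ := ih; exact ⟨ts ++ [_], fs_append hts hf⟩

/-- The key invariant on territory/law pairs: all regions are nonempty, and every
treaty member is an abstractly reachable marking with the current law. -/
def GoodT (N : PetriNet Place Trans Stmt State)
    (postA : (State → Prop) → Trans → (State → Prop))
    (τ : Set (Set Place)) (φ : State → Prop) : Prop :=
  (∀ r ∈ τ, r.Nonempty) ∧
  ∀ m, InTreaty τ m → N.AbsReachG postA (fun _ => True) m φ

lemma no_two {postA : (State → Prop) → Trans → (State → Prop)}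
    {τ : Set (Set Place)} {φ : State → Prop} {t : Trans} {p p' : Place}
    (hco : ∀ r ∈ τ, (r ∩ N.pre t).Nonempty → ∀ p'' ∈ r, ∀ q' ∈ N.post t,
      ¬ N.coRelated q' p'')
    (hG : GoodT N postA τ φ)
    (hpre : N.pre t = {p}) (hpo : N.post t = {p'})
    {rA rB : Set Place} {q : Place}
    (hA : rA ∈ τ) (hB : rB ∈ τ) (hpA : p ∈ rA) (hpB : p ∈ rB)
    (hq : q ∈ rA) (hqB : q ∉ rB) : False := by
  have hqp : q ≠ p := fun h => hqB (h ▸ hpB)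
  have hAB : rA ≠ rB := fun h => hqB (h ▸ hq)
  set F : Set Place → Place :=
    fun r => if r = rA then q else if p ∈ r then p
      else if h : r.Nonempty then h.some else q with hFdef
  have hF : ∀ r ∈ τ, F r ∈ r := by
    intro r hr
    by_cases h1 : r = rA
    · simp only [hFdef, if_pos h1]; exact h1 ▸ hq
    · by_cases h2 : p ∈ r
      · simp only [hFdef, if_neg h1, if_pos h2]; exact h2
      · simp only [hFdef, if_neg h1, if_neg h2, dif_pos (hG.1 r hr)]
        exact (hG.1 r hr).some_mem
  set m : Set Place := {x | ∃ r ∈ τ, x = F r} with hmdef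
  have hInT : InTreaty τ m := ⟨F, hF, rfl⟩
  have habs := hG.2 m hInT
  have hreach := reach_of_abs habs
  have hqm : q ∈ m := ⟨rA, hA, by simp [hFdef]⟩
  have hpm : p ∈ m := ⟨rB, hB, by simp [hFdef, if_neg (Ne.symm hAB), hpB]⟩
  have hp'post : p' ∈ N.post t := by rw [hpo]; rfl
  by_cases hq' : q = p'
  · exact hco rB hB ⟨p, hpB, by rw [hpre]; rfl⟩ p hpB p' hp'post
      ⟨fun h => hqp (hq' ▸ h.symm).symm, m, hreach, hq' ▸ hqm, hpm⟩
  · -- fire t from m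
    have hfires : N.fires m t ((m \ N.pre t) ∪ N.post t) :=
      ⟨by rw [hpre]; simpa using hpm, rfl⟩
    have hre2 : N.Reachable ((m \ N.pre t) ∪ N.post t) := by
      obtain ⟨ts, hts⟩ := hreach
      exact ⟨ts ++ [t], fs_append hts hfires⟩
    refine hco rA hA ⟨p, hpA, by rw [hpre]; rfl⟩ q hq p' hp'post
      ⟨fun h => hq' h.symm, (m \ N.pre t) ∪ N.post t, hre2, Or.inr hp'post, ?_⟩
    exact Or.inl ⟨hqm, by rw [hpre]; simpa using hqp⟩

lemma extend_good {postA : (State → Prop) → Trans → (State → Prop)}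
    {τ : Set (Set Place)} {φ : State → Prop} {t : Trans}
    (hext : N.extendable t τ) (hG : GoodT N postA τ φ)
    (hfix : postA φ t = φ) : GoodT N postA (N.extendT t τ) φ := by
  obtain ⟨hen, ⟨p, hpre⟩, ⟨p', hpo⟩, hco⟩ := hext
  obtain ⟨f, hf1, _⟩ := hen
  have hr0 := hf1 p (by rw [hpre]; rfl)
  set r₀ := f p with hr0def
  -- uniqueness of the region containing p
  have uniq : ∀ r ∈ τ, p ∈ r → r = r₀ := by
    intro r hr hpr
    by_contra hne
    by_cases hsub : r ⊆ r₀
    · have : ¬ r₀ ⊆ r := fun h => hne (subset_antisymm hsub h)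
      obtain ⟨q, hq1, hq2⟩ := Set.not_subset.mp this
      exact no_two hco hG hpre hpo hr0.1 hr hr0.2 hpr hq1 hq2
    · obtain ⟨q, hq1, hq2⟩ := Set.not_subset.mp hsub
      exact no_two hco hG hpre hpo hr hr0.1 hpr hr0.2 hq1 hq2
  -- structure of the extended territory
  have hE : N.extendT t τ = N.bystanders t τ ∪ {r₀ ∪ {p'}} := by
    unfold PetriNet.extendT
    congr 1
    ext e
    simp only [Set.mem_setOf_eq, Set.mem_singleton_iff]
    constructor
    · rintro ⟨rr, hrr, ⟨z, hz1, hz2⟩, rfl⟩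
      rw [hpre] at hz2
      rw [uniq rr hrr (hz2 ▸ hz1), hpo]
    · rintro rfl
      exact ⟨r₀, hr0.1, ⟨p, hr0.2, by rw [hpre]; rfl⟩, by rw [hpo]⟩
  have hbyst_mem : ∀ r ∈ τ, p ∉ r → r ∈ N.bystanders t τ := by
    intro r hr hpr
    refine ⟨hr, ?_⟩
    ext z
    simp only [Set.mem_inter_iff, Set.mem_empty_iff_false, iff_false, not_and]
    intro hz hz2; rw [hpre] at hz2; exact hpr (hz2 ▸ hz)
  have hbyst_np : ∀ r ∈ N.bystanders t τ, p ∉ r := by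
    intro r hr hpr
    have : p ∈ r ∩ N.pre t := ⟨hpr, by rw [hpre]; rfl⟩
    rw [hr.2] at this; exact this
  constructor
  · intro r hr
    rw [hE] at hr
    rcases hr with hr | hr
    · exact hG.1 r hr.1
    · rw [Set.mem_singleton_iff] at hr
      exact ⟨p, hr ▸ Or.inl hr0.2⟩
  · rintro m' ⟨g, hg1, rfl⟩
    have he0 : r₀ ∪ {p'} ∈ N.extendT t τ := by rw [hE]; exact Or.inr rfl
    have hx : g (r₀ ∪ {p'}) ∈ r₀ ∪ {p'} := hg1 _ he0
    by_cases hxr : g (r₀ ∪ {p'}) ∈ r₀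
    · -- the extended region picks an old place: same treaty as in τ
      set F : Set Place → Place := fun r => if p ∈ r then g (r₀ ∪ {p'}) else g r
        with hFdef
      have hF : ∀ r ∈ τ, F r ∈ r := by
        intro r hr
        by_cases h2 : p ∈ r
        · simp only [hFdef, if_pos h2]; exact (uniq r hr h2) ▸ hxr
        · simp only [hFdef, if_neg h2]
          exact hg1 r (by rw [hE]; exact Or.inl (hbyst_mem r hr h2))
      have habs := hG.2 _ ⟨F, hF, rfl⟩
      have hmm : {x | ∃ r ∈ τ, x = F r} = {x | ∃ e ∈ N.extendT t τ, x = g e} := by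
        ext z
        simp only [Set.mem_setOf_eq]
        constructor
        · rintro ⟨r, hr, rfl⟩
          by_cases h2 : p ∈ r
          · exact ⟨r₀ ∪ {p'}, he0, by simp [hFdef, if_pos h2]⟩
          · exact ⟨r, by rw [hE]; exact Or.inl (hbyst_mem r hr h2),
              by simp [hFdef, if_neg h2]⟩
        · rintro ⟨e, he, rfl⟩
          rw [hE] at he
          rcases he with he | he
          · exact ⟨e, he.1, by simp [hFdef, if_neg (hbyst_np e he)]⟩
          · rw [Set.mem_singleton_iff] at he
            subst he
            exact ⟨r₀, hr0.1, by simp [hFdef, if_pos hr0.2]⟩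
      rwa [hmm] at habs
    · -- the extended region picks p': obtained by firing t
      have hxp : g (r₀ ∪ {p'}) = p' := by
        rcases hx with h | h
        · exact absurd h hxr
        · simpa using h
      set F : Set Place → Place := fun r => if p ∈ r then p else g r with hFdef
      have hF : ∀ r ∈ τ, F r ∈ r := by
        intro r hr
        by_cases h2 : p ∈ r
        · simp only [hFdef, if_pos h2]; exact h2
        · simp only [hFdef, if_neg h2]
          exact hg1 r (by rw [hE]; exact Or.inl (hbyst_mem r hr h2))
      have habs := hG.2 _ ⟨F, hF, rfl⟩
      set m : Set Place := {x | ∃ r ∈ τ, x = F r} with hmdef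
      have hpm : p ∈ m := ⟨r₀, hr0.1, by simp [hFdef, if_pos hr0.2]⟩
      have hfires : N.fires m t {x | ∃ e ∈ N.extendT t τ, x = g e} := by
        constructor
        · rw [hpre]; simpa using hpm
        · ext z
          simp only [Set.mem_setOf_eq, Set.mem_union, Set.mem_diff]
          constructor
          · rintro ⟨e, he, rfl⟩
            rw [hE] at he
            rcases he with he | he
            · left
              refine ⟨⟨e, he.1, by simp [hFdef, if_neg (hbyst_np e he)]⟩, ?_⟩
              rw [hpre]
              simp only [Set.mem_singleton_iff]
              exact fun h => hbyst_np e he (h ▸ hg1 e (by rw [hE]; exact Or.inl he))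
            · rw [Set.mem_singleton_iff] at he
              subst he
              right; rw [hxp, hpo]; rfl
          · rintro (⟨⟨r, hr, rfl⟩, hnp⟩ | hq)
            · by_cases h2 : p ∈ r
              · exfalso; apply hnp; rw [hpre]
                simp [hFdef, if_pos h2]
              · exact ⟨r, by rw [hE]; exact Or.inl (hbyst_mem r hr h2),
                  by simp [hFdef, if_neg h2]⟩
            · rw [hpo, Set.mem_singleton_iff] at hq
              exact ⟨r₀ ∪ {p'}, he0, by rw [hxp, hq]⟩
      have := PetriNet.AbsReachG.step habs hfires
      rwa [hfix] at this

lemma replace_good {postA : (State → Prop) → Trans → (State → Prop)}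
    {τ : Set (Set Place)} {φ : State → Prop} {t : Trans}
    (hen : N.terrEnabled t τ) (hG : GoodT N postA τ φ) :
    GoodT N postA (N.replaceT t τ) (postA φ t) := by
  obtain ⟨f, hf1, hf2⟩ := hen
  constructor
  · rintro r (hr | ⟨q, _, rfl⟩)
    · exact hG.1 r hr.1
    · exact ⟨q, rfl⟩
  · rintro m' ⟨g, hg1, rfl⟩
    set F : Set Place → Place := fun r =>
      if h1 : ∃ q ∈ N.pre t, f q = r then h1.choose
      else if h2 : (r ∩ N.pre t).Nonempty then h2.some else g r with hFdef
    have hbyst : ∀ r ∈ τ, r ∩ N.pre t = ∅ → r ∈ N.bystanders t τ := fun r hr h => ⟨hr, h⟩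
    have hF3 : ∀ r, r ∩ N.pre t = ∅ → F r = g r := by
      intro r hr
      have h1 : ¬ ∃ q ∈ N.pre t, f q = r := by
        rintro ⟨q, hq, rfl⟩
        have : q ∈ f q ∩ N.pre t := ⟨(hf1 q hq).2, hq⟩
        rw [hr] at this; exact this
      have h2 : ¬ (r ∩ N.pre t).Nonempty := by rw [hr]; exact Set.not_nonempty_empty
      simp only [hFdef, dif_neg h1, dif_neg h2]
    have hF : ∀ r ∈ τ, F r ∈ r := by
      intro r hr
      by_cases h1 : ∃ q ∈ N.pre t, f q = r
      · simp only [hFdef, dif_pos h1]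
        obtain ⟨hq, hfq⟩ := h1.choose_spec
        have hm := (hf1 _ hq).2
        rw [hfq] at hm; exact hm
      · by_cases h2 : (r ∩ N.pre t).Nonempty
        · simp only [hFdef, dif_neg h1, dif_pos h2]
          exact h2.some_mem.1
        · simp only [hFdef, dif_neg h1, dif_neg h2]
          exact hg1 r (Or.inl (hbyst r hr (Set.not_nonempty_iff_eq_empty.mp h2)))
    have habs := hG.2 _ ⟨F, hF, rfl⟩
    set m : Set Place := {x | ∃ r ∈ τ, x = F r} with hmdef
    have hFbr : ∀ r, (∃ q ∈ N.pre t, f q = r) ∨ (r ∩ N.pre t).Nonempty → F r ∈ N.pre t := by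
      rintro r (h1 | h2)
      · simp only [hFdef, dif_pos h1]
        exact h1.choose_spec.1
      · by_cases h1 : ∃ q ∈ N.pre t, f q = r
        · simp only [hFdef, dif_pos h1]; exact h1.choose_spec.1
        · simp only [hFdef, dif_neg h1, dif_pos h2]; exact h2.some_mem.2
    have hfires : N.fires m t {x | ∃ e ∈ N.replaceT t τ, x = g e} := by
      constructor
      · -- pre t ⊆ m
        intro q hq
        refine ⟨f q, (hf1 q hq).1, ?_⟩
        have h1 : ∃ q' ∈ N.pre t, f q' = f q := ⟨q, hq, rfl⟩
        simp only [hFdef, dif_pos h1]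
        obtain ⟨hc1, hc2⟩ := h1.choose_spec
        by_contra hne
        exact hf2 _ hc1 _ hq (fun h => hne h.symm) hc2
      · ext z
        simp only [Set.mem_setOf_eq, Set.mem_union, Set.mem_diff]
        constructor
        · rintro ⟨e, he, rfl⟩
          rcases he with he | ⟨q, hq, rfl⟩
          · left
            refine ⟨⟨e, he.1, (hF3 e he.2).symm⟩, ?_⟩
            intro hz
            have : g e ∈ e ∩ N.pre t :=
              ⟨hg1 e (Or.inl he), hz⟩
            rw [he.2] at this; exact this
          · right
            have := hg1 {q} (Or.inr ⟨q, hq, rfl⟩)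
            rw [Set.mem_singleton_iff] at this
            rw [this]; exact hq
        · rintro (⟨⟨r, hr, rfl⟩, hnp⟩ | hq)
          · by_cases hcase : (∃ q ∈ N.pre t, f q = r) ∨ (r ∩ N.pre t).Nonempty
            · exact absurd (hFbr r hcase) hnp
            · push_neg at hcase
              have hre : r ∩ N.pre t = ∅ := hcase.2
              exact ⟨r, Or.inl (hbyst r hr hre), hF3 r hre⟩
          · refine ⟨{z}, Or.inr ⟨z, hq, rfl⟩, ?_⟩
            have := hg1 {z} (Or.inr ⟨z, hq, rfl⟩)
            rw [Set.mem_singleton_iff] at this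
            exact this.symm
    exact PetriNet.AbsReachG.step habs hfires

lemma sat_good {postA : (State → Prop) → Trans → (State → Prop)}
    {τ τ' : Set (Set Place)} {φ : State → Prop} {rb : Set (Set Place)}
    (h : N.SaturateG postA φ rb τ τ') :
    GoodT N postA τ φ → GoodT N postA τ' φ := by
  induction h with
  | base _ => exact id
  | step hext _ hpost _ _ ih => exact fun hG => ih (extend_good hext hG hpost)

end S17Aux

open GhostsOfEmpires in
/-- For a saturated empire `E` and each error place `p ∈ Err`, there
exists no state `q ∈ Q` such that `p` lies in some region of `terr(q)`. -/
theorem statement17 {Place Trans Stmt State : Type*}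
    [Fintype Place] [Fintype Trans] [Fintype Stmt] [Nonempty State]
    (N : PetriNet Place Trans Stmt State)
    (D : N.InvDomain) (hD : N.SafeDomain D)
    (q0 : Set (Set Place) × (State → Prop))
    (δ0 : Set (Set Place) × (State → Prop) → Trans →
      Option (Set (Set Place) × (State → Prop)))
    (hsat : N.IsSaturatedG D.postF (fun φ => φ) (fun _ => True) q0 δ0)
    (p : Place) (hp : p ∈ N.err) :
    ¬ ∃ q : Set (Set Place) × (State → Prop),
        EmpReach q0 δ0 q ∧ ∃ r ∈ q.1, p ∈ r := by
  classical
  rintro ⟨q, hre, r, hr, hpr⟩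
  have main : ∀ q', EmpReach q0 δ0 q' →
      (∃ s, q'.2 s) ∧ S17Aux.GoodT N D.postF q'.1 q'.2 := by
    intro q' h
    induction h with
    | init =>
      obtain ⟨τ, hτ, hq0⟩ := hsat.initCond
      subst hq0
      refine ⟨⟨Classical.arbitrary State, trivial⟩, S17Aux.sat_good hτ ⟨?_, ?_⟩⟩
      · rintro _ ⟨p₁, _, rfl⟩; exact ⟨p₁, rfl⟩
      · rintro m ⟨f, hf1, rfl⟩
        have hmeq : {x | ∃ r' ∈ N.tauInit, x = f r'} = N.mInit := by
          ext z
          simp only [Set.mem_setOf_eq]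
          constructor
          · rintro ⟨_, ⟨p₁, hp₁, rfl⟩, rfl⟩
            have hz := hf1 {p₁} ⟨p₁, hp₁, rfl⟩
            rw [Set.mem_singleton_iff] at hz
            rw [hz]; exact hp₁
          · intro hz
            refine ⟨{z}, ⟨z, hz, rfl⟩, ?_⟩
            have hz' := hf1 {z} ⟨z, hz, rfl⟩
            rw [Set.mem_singleton_iff] at hz'
            exact hz'.symm
        rw [hmeq]
        exact PetriNet.AbsReachG.init
    | step hre' hδ ih =>
      rename_i qc t qn
      have hne : ¬ (¬ N.terrEnabled t qc.1 ∨ ∀ s, ¬ (D.postF qc.2 t) s) := by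
        intro h
        have h0 := hsat.undefCond qc.1 qc.2 t h
        rw [Prod.mk.eta] at h0
        rw [h0] at hδ
        exact Option.some_ne_none _ hδ.symm
      push_neg at hne
      obtain ⟨hen, hs⟩ := hne
      by_cases hfx : N.terrFires qc.1 t qc.1 ∧ D.postF qc.2 t = qc.2
      · have h1 := hsat.selfCond qc.1 qc.2 t hen hs hfx.1 hfx.2
        rw [Prod.mk.eta] at h1
        rw [h1] at hδ
        have heq := Option.some.inj hδ
        rw [← heq]
        exact ih
      · obtain ⟨τ', hτ', h2⟩ := hsat.stepCond qc.1 qc.2 t hen hs hfx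
        rw [Prod.mk.eta] at h2
        rw [h2] at hδ
        have heq := Option.some.inj hδ
        rw [← heq]
        exact ⟨hs, S17Aux.sat_good hτ' (S17Aux.replace_good hen ih.2)⟩
  obtain ⟨⟨s, hsφ⟩, hne, htr⟩ := main q hre
  set F : Set Place → Place := fun r' => if p ∈ r' then p
    else if h : r'.Nonempty then h.some else p with hFdef
  have hF : ∀ r' ∈ q.1, F r' ∈ r' := by
    intro r' hr'
    by_cases h1 : p ∈ r'
    · simp only [hFdef, if_pos h1]; exact h1
    · simp only [hFdef, if_neg h1, dif_pos (hne r' hr')]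
      exact (hne r' hr').some_mem
  have habs := htr _ ⟨F, hF, rfl⟩
  have hpm : p ∈ {x | ∃ r' ∈ q.1, x = F r'} := ⟨r, hr, by simp [hFdef, hpr]⟩
  exact hD _ q.2 habs ⟨p, hpm, hp⟩ s hsφ
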